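/- Define R_a = ∫₀^a ( √((L−ρ)²/4 − v₀^min) − √(ρ²/4 + v₀(ρ) − v₀^min) ) dρ. If v₀ ≤ 0, v₀^min < 0 and 0 < 2a < L, then 0 < R_a ≤ ((L−a)/2 + √(|v₀^min|)) · a. -/
import Mathlib


open Real intervalIntegral

/-- bounds on the remainder `R_a`. -/
theorem stmt1 (v₀ : ℝ → ℝ) (vmin : ℝ) (a L : ℝ)
    (hcont : Continuous v₀)
    (hneg : ∀ r ≥ (0:ℝ), v₀ r ≤ 0)
    (hmin : ∀ r ≥ (0:ℝ), vmin ≤ v₀ r) (hvmin : vmin < 0)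
    (hsupp : ∀ r ≥ a, v₀ r = 0)
    (ha : 0 < a) (hL : 2 * a < L) :
    0 < ∫ ρ in (0:ℝ)..a,
        (Real.sqrt ((L - ρ) ^ 2 / 4 - vmin) - Real.sqrt (ρ ^ 2 / 4 + v₀ ρ - vmin)) ∧
    (∫ ρ in (0:ℝ)..a,
        (Real.sqrt ((L - ρ) ^ 2 / 4 - vmin) - Real.sqrt (ρ ^ 2 / 4 + v₀ ρ - vmin)))
      ≤ ((L - a) / 2 + Real.sqrt |vmin|) * a := by
  set s := Real.sqrt |vmin| with hs
  have hs0 : 0 ≤ s := Real.sqrt_nonneg _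
  have hcf : Continuous fun ρ : ℝ =>
      Real.sqrt ((L - ρ) ^ 2 / 4 - vmin) - Real.sqrt (ρ ^ 2 / 4 + v₀ ρ - vmin) := by
    apply Continuous.sub
    · exact Real.continuous_sqrt.comp (by continuity)
    · exact Real.continuous_sqrt.comp (by continuity)
  have hintf : IntervalIntegrable (fun ρ : ℝ =>
      Real.sqrt ((L - ρ) ^ 2 / 4 - vmin) - Real.sqrt (ρ ^ 2 / 4 + v₀ ρ - vmin))
      MeasureTheory.volume 0 a := hcf.intervalIntegrable 0 a
  constructor
  · apply intervalIntegral_pos_of_pos_on hintf _ ha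
    intro ρ hρ
    obtain ⟨h0ρ, hρa⟩ := hρ
    have h0ρ' : (0:ℝ) ≤ ρ := le_of_lt h0ρ
    have harg0 : 0 ≤ ρ ^ 2 / 4 + v₀ ρ - vmin := by
      have := hmin ρ h0ρ'
      nlinarith [sq_nonneg ρ]
    have hlt : ρ ^ 2 / 4 + v₀ ρ - vmin < (L - ρ) ^ 2 / 4 - vmin := by
      have h1 : v₀ ρ ≤ 0 := hneg ρ h0ρ'
      have h2 : ρ < L - ρ := by linarith
      nlinarith [sq_nonneg ρ]
    have := Real.sqrt_lt_sqrt harg0 hlt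
    linarith
  · have hb : ∀ ρ ∈ Set.Icc (0:ℝ) a,
        Real.sqrt ((L - ρ) ^ 2 / 4 - vmin) - Real.sqrt (ρ ^ 2 / 4 + v₀ ρ - vmin)
          ≤ (L / 2 + s) - ρ := by
      intro ρ hρ
      obtain ⟨h0ρ, hρa⟩ := hρ
      have hρL : ρ ≤ L - ρ := by linarith
      have hLρ0 : 0 ≤ L - ρ := by linarith
      have hs2 : s ^ 2 = |vmin| := Real.sq_sqrt (abs_nonneg _)
      have habs : |vmin| = -vmin := abs_of_neg hvmin
      have h1 : Real.sqrt ((L - ρ) ^ 2 / 4 - vmin) ≤ (L - ρ) / 2 + s := by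
        have hle : (L - ρ) ^ 2 / 4 - vmin ≤ ((L - ρ) / 2 + s) ^ 2 := by
          nlinarith [mul_nonneg (by linarith : (0:ℝ) ≤ (L - ρ) / 2) hs0]
        calc Real.sqrt ((L - ρ) ^ 2 / 4 - vmin)
            ≤ Real.sqrt (((L - ρ) / 2 + s) ^ 2) := Real.sqrt_le_sqrt hle
          _ = (L - ρ) / 2 + s := Real.sqrt_sq (by positivity)
      have h2 : ρ / 2 ≤ Real.sqrt (ρ ^ 2 / 4 + v₀ ρ - vmin) := by
        have hle : (ρ / 2) ^ 2 ≤ ρ ^ 2 / 4 + v₀ ρ - vmin := by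
          have := hmin ρ h0ρ
          nlinarith
        calc ρ / 2 = Real.sqrt ((ρ / 2) ^ 2) := (Real.sqrt_sq (by linarith)).symm
          _ ≤ _ := Real.sqrt_le_sqrt hle
      linarith
    have hintg : IntervalIntegrable (fun ρ : ℝ => (L / 2 + s) - ρ)
        MeasureTheory.volume 0 a := (by continuity : Continuous fun ρ : ℝ => (L / 2 + s) - ρ).intervalIntegrable 0 a
    have hmono := integral_mono_on (le_of_lt ha) hintf hintg hb
    have hcomp : (∫ ρ in (0:ℝ)..a, ((L / 2 + s) - ρ)) = ((L - a) / 2 + s) * a := by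
      rw [integral_sub (intervalIntegrable_const) intervalIntegrable_id]
      simp [integral_id]
      ring
    rw [hcomp] at hmono
    exact hmono
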